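/- arXiv:1711.09406 — 2 statements merged into one kernel-verified Lean document; each statement's English description precedes it below -/
import Mathlib

section
/- Let p be a positive rational with √p irrational, and let x₁ = a₁ + b₁√p, …, xₙ = aₙ + bₙ√p (n ≥ 2) with all aᵢ, bᵢ ∈ ℚ and all xᵢ > 0. Suppose there exist indices i, j with (aᵢ − bᵢ√p)(aⱼ − bⱼ√p) < 0. Then for every z = e + f√p > 0 with e, f ∈ ℚ, the rectangle of aspect ratio z admits a diverse tiling by rectangles with aspect ratios x₁, …, xₙ. -/
/-- A tiling of the rectangle `[0,1] × [0,r]` by finitely many closed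
axis-parallel rectangles with positive side lengths, covering the rectangle
and having pairwise disjoint interiors. -/
structure RectTiling (r : ℝ) where
  m : ℕ
  px : Fin m → ℝ
  py : Fin m → ℝ
  w : Fin m → ℝ
  h : Fin m → ℝ
  w_pos : ∀ k, 0 < w k
  h_pos : ∀ k, 0 < h k
  cover : (Set.Icc (0:ℝ) 1 ×ˢ Set.Icc (0:ℝ) r) =
      ⋃ k, Set.Icc (px k) (px k + w k) ×ˢ Set.Icc (py k) (py k + h k)
  disj : ∀ k l, k ≠ l →
      Disjoint ((Set.Ioo (px k) (px k + w k)) ×ˢ (Set.Ioo (py k) (py k + h k)))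
               ((Set.Ioo (px l) (px l + w l)) ×ˢ (Set.Ioo (py l) (py l + h l)))

/-- Tile `k` of the tiling `T` has aspect ratio `x` (in one of the two orientations). -/
def RectTiling.ratioOK {r : ℝ} (T : RectTiling r) (k : Fin T.m) (x : ℝ) : Prop :=
  T.h k / T.w k = x ∨ T.w k / T.h k = x

/-- The rectangle of aspect ratio `r` is tileable by rectangles with aspect
ratios among `X`. -/
def Tileable (r : ℝ) {n : ℕ} (X : Fin n → ℝ) : Prop :=
  ∃ T : RectTiling r, ∀ k, ∃ i, T.ratioOK k (X i)

/-- The rectangle of aspect ratio `r` admits a *diverse* tiling by rectangles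
with aspect ratios `X 0, …, X (n-1)`: every tile has some ratio `X i`, and for
every `i` some tile has ratio `X i`. -/
def DiverselyTileable (r : ℝ) {n : ℕ} (X : Fin n → ℝ) : Prop :=
  ∃ T : RectTiling r, (∀ k, ∃ i, T.ratioOK k (X i)) ∧ (∀ i, ∃ k, T.ratioOK k (X i))

namespace RectTiling

variable {r : ℝ}

lemma tile_subset (T : RectTiling r) (k : Fin T.m) :
    Set.Icc (T.px k) (T.px k + T.w k) ×ˢ Set.Icc (T.py k) (T.py k + T.h k) ⊆
      Set.Icc (0:ℝ) 1 ×ˢ Set.Icc (0:ℝ) r := by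
  rw [T.cover]
  exact Set.subset_iUnion
    (fun k => Set.Icc (T.px k) (T.px k + T.w k) ×ˢ Set.Icc (T.py k) (T.py k + T.h k)) k

lemma py_nonneg (T : RectTiling r) (k : Fin T.m) : 0 ≤ T.py k := by
  have hmem : ((T.px k, T.py k) : ℝ × ℝ) ∈
      Set.Icc (T.px k) (T.px k + T.w k) ×ˢ Set.Icc (T.py k) (T.py k + T.h k) :=
    Set.mem_prod.2 ⟨Set.mem_Icc.2 ⟨le_refl _, by linarith [(T.w_pos k).le]⟩,
      Set.mem_Icc.2 ⟨le_refl _, by linarith [(T.h_pos k).le]⟩⟩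
  exact (Set.mem_prod.1 (T.tile_subset k hmem)).2.1

lemma py_add_le (T : RectTiling r) (k : Fin T.m) : T.py k + T.h k ≤ r := by
  have hmem : ((T.px k, T.py k + T.h k) : ℝ × ℝ) ∈
      Set.Icc (T.px k) (T.px k + T.w k) ×ˢ Set.Icc (T.py k) (T.py k + T.h k) :=
    Set.mem_prod.2 ⟨Set.mem_Icc.2 ⟨le_refl _, by linarith [(T.w_pos k).le]⟩,
      Set.mem_Icc.2 ⟨by dsimp only; linarith [(T.h_pos k).le], le_refl _⟩⟩
  exact (Set.mem_prod.1 (T.tile_subset k hmem)).2.2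

lemma m_pos (hr : 0 ≤ r) (T : RectTiling r) : ∃ k : Fin T.m, True := by
  have h0 : ((0 : ℝ), (0 : ℝ)) ∈ (Set.Icc (0:ℝ) 1 ×ˢ Set.Icc (0:ℝ) r) :=
    ⟨Set.mem_Icc.2 ⟨le_refl _, zero_le_one⟩, Set.mem_Icc.2 ⟨le_refl _, hr⟩⟩
  rw [T.cover] at h0
  obtain ⟨k, -⟩ := Set.mem_iUnion.1 h0
  exact ⟨k, trivial⟩

end RectTiling

/-- Single-tile tiling of a rectangle of ratio `x`. -/
def singleTiling (x : ℝ) (hx : 0 < x) : RectTiling x where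
  m := 1
  px := fun _ => 0
  py := fun _ => 0
  w := fun _ => 1
  h := fun _ => x
  w_pos := fun _ => one_pos
  h_pos := fun _ => hx
  cover := by
    ext q; simp [Set.mem_iUnion]
  disj := by
    intro k l hkl
    exact absurd (Subsingleton.elim k l) hkl

lemma stack_tiling {r₁ r₂ : ℝ} (h₁ : 0 ≤ r₁) (h₂ : 0 ≤ r₂)
    (T₁ : RectTiling r₁) (T₂ : RectTiling r₂) :
    ∃ T : RectTiling (r₁ + r₂),
      (∀ k, (∃ k₁, T.w k = T₁.w k₁ ∧ T.h k = T₁.h k₁) ∨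
            (∃ k₂, T.w k = T₂.w k₂ ∧ T.h k = T₂.h k₂)) ∧
      (∀ k₁, ∃ k, T.w k = T₁.w k₁ ∧ T.h k = T₁.h k₁) ∧
      (∀ k₂, ∃ k, T.w k = T₂.w k₂ ∧ T.h k = T₂.h k₂) := by
  refine ⟨{ m := T₁.m + T₂.m
            px := Fin.append T₁.px T₂.px
            py := Fin.append T₁.py (fun k => T₂.py k + r₁)
            w := Fin.append T₁.w T₂.w
            h := Fin.append T₁.h T₂.h
            w_pos := ?_
            h_pos := ?_
            cover := ?_
            disj := ?_ }, ?_, ?_, ?_⟩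
  · intro k
    refine Fin.addCases (fun i => ?_) (fun i => ?_) k
    · rw [Fin.append_left]; exact T₁.w_pos i
    · rw [Fin.append_right]; exact T₂.w_pos i
  · intro k
    refine Fin.addCases (fun i => ?_) (fun i => ?_) k
    · rw [Fin.append_left]; exact T₁.h_pos i
    · rw [Fin.append_right]; exact T₂.h_pos i
  · ext q
    constructor
    · rintro ⟨hu, hv⟩
      simp only [Set.mem_Icc] at hu hv
      by_cases hcase : q.2 ≤ r₁
      · have hq : q ∈ (Set.Icc (0:ℝ) 1 ×ˢ Set.Icc (0:ℝ) r₁) :=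
          ⟨Set.mem_Icc.2 hu, Set.mem_Icc.2 ⟨hv.1, hcase⟩⟩
        rw [T₁.cover] at hq
        obtain ⟨k₁, hk₁⟩ := Set.mem_iUnion.1 hq
        refine Set.mem_iUnion.2 ⟨Fin.castAdd T₂.m k₁, ?_⟩
        simpa only [Fin.append_left] using hk₁
      · push_neg at hcase
        have hq : ((q.1, q.2 - r₁) : ℝ × ℝ) ∈ (Set.Icc (0:ℝ) 1 ×ˢ Set.Icc (0:ℝ) r₂) :=
          Set.mem_prod.2 ⟨Set.mem_Icc.2 hu, Set.mem_Icc.2 ⟨by dsimp only; linarith, by dsimp only; linarith⟩⟩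
        rw [T₂.cover] at hq
        obtain ⟨k₂, hk₂⟩ := Set.mem_iUnion.1 hq
        obtain ⟨ha, hb⟩ := hk₂
        simp only [Set.mem_Icc] at ha hb
        refine Set.mem_iUnion.2 ⟨Fin.natAdd T₁.m k₂, ?_⟩
        refine ⟨?_, ?_⟩ <;> simp only [Fin.append_right, Set.mem_Icc]
        · exact ha
        · constructor <;> [linarith [hb.1]; linarith [hb.2]]
    · intro hq
      obtain ⟨k, hk⟩ := Set.mem_iUnion.1 hq
      revert hk
      refine Fin.addCases (fun i => ?_) (fun i => ?_) k <;> intro hk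
      · simp only [Fin.append_left] at hk
        have := T₁.tile_subset i hk
        exact ⟨this.1, Set.mem_Icc.2 ⟨(Set.mem_Icc.1 this.2).1,
          le_trans (Set.mem_Icc.1 this.2).2 (by linarith)⟩⟩
      · simp only [Fin.append_right] at hk
        obtain ⟨ha, hb⟩ := hk
        simp only [Set.mem_Icc] at hb
        have hmem2 : ((q.1, q.2 - r₁) : ℝ × ℝ) ∈
            Set.Icc (T₂.px i) (T₂.px i + T₂.w i) ×ˢ Set.Icc (T₂.py i) (T₂.py i + T₂.h i) :=
          Set.mem_prod.2 ⟨ha, Set.mem_Icc.2 ⟨by dsimp only; linarith, by dsimp only; linarith⟩⟩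
        have hsub := T₂.tile_subset i hmem2
        refine ⟨hsub.1, Set.mem_Icc.2 ⟨?_, ?_⟩⟩
        · have h1' := (Set.mem_Icc.1 hsub.2).1
          dsimp only at h1'
          have h0 := T₂.py_nonneg i
          linarith [hb.1]
        · have h2' := (Set.mem_Icc.1 hsub.2).2
          dsimp only at h2'
          linarith
  · intro k l hkl
    rw [Set.disjoint_left]
    rintro q hq hq'
    revert hq hq' hkl
    refine Fin.addCases (fun i => ?_) (fun i => ?_) k <;>
      refine Fin.addCases (fun j => ?_) (fun j => ?_) l <;>
        intro hkl hq hq'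
    · -- both left
      have hij : i ≠ j := fun hij => hkl (by rw [hij])
      have := T₁.disj i j hij
      rw [Set.disjoint_left] at this
      refine this (a := q) ?_ ?_
      · simpa only [Fin.append_left] using hq
      · simpa only [Fin.append_left] using hq'
    · -- left/right : y-coordinates separated by r₁
      simp only [Fin.append_left] at hq
      simp only [Fin.append_right] at hq'
      exact absurd hq'.2.1 (by push_neg; linarith [hq.2.2, T₁.py_add_le i, T₂.py_nonneg j])
    · simp only [Fin.append_right] at hq
      simp only [Fin.append_left] at hq'
      exact absurd hq.2.1 (by push_neg; linarith [hq'.2.2, T₁.py_add_le j, T₂.py_nonneg i])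
    · have hij : i ≠ j := by
        intro hij; exact hkl (by rw [hij])
      have := T₂.disj i j hij
      rw [Set.disjoint_left] at this
      simp only [Fin.append_right] at hq hq'
      refine this (a := ((q.1, q.2 - r₁) : ℝ × ℝ)) ?_ ?_
      · exact Set.mem_prod.2 ⟨hq.1, Set.mem_Ioo.2 ⟨by dsimp only; linarith [hq.2.1], by dsimp only; linarith [hq.2.2]⟩⟩
      · exact Set.mem_prod.2 ⟨hq'.1, Set.mem_Ioo.2 ⟨by dsimp only; linarith [hq'.2.1], by dsimp only; linarith [hq'.2.2]⟩⟩
  · intro k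
    refine Fin.addCases (fun i => ?_) (fun i => ?_) k
    · exact Or.inl ⟨i, by simp [Fin.append_left]⟩
    · exact Or.inr ⟨i, by simp [Fin.append_right]⟩
  · intro k₁
    exact ⟨Fin.castAdd T₂.m k₁, by simp [Fin.append_left]⟩
  · intro k₂
    exact ⟨Fin.natAdd T₁.m k₂, by simp [Fin.append_right]⟩

lemma rot_tiling {r : ℝ} (hr : 0 < r) (T : RectTiling r) :
    ∃ T' : RectTiling r⁻¹,
      (∀ k, ∃ k₀, T'.w k = T.h k₀ / r ∧ T'.h k = T.w k₀ / r) ∧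
      (∀ k₀, ∃ k, T'.w k = T.h k₀ / r ∧ T'.h k = T.w k₀ / r) := by
  have hmem : ∀ (u v : ℝ), ((u, v) : ℝ × ℝ) ∈ (Set.Icc (0:ℝ) 1 ×ˢ Set.Icc (0:ℝ) r⁻¹) ↔
      ((r * v, r * u) : ℝ × ℝ) ∈ (Set.Icc (0:ℝ) 1 ×ˢ Set.Icc (0:ℝ) r) := by
    intro u v
    simp only [Set.mem_prod, Set.mem_Icc]
    constructor
    · rintro ⟨⟨hu0, hu1⟩, hv0, hv1⟩
      refine ⟨⟨by positivity, ?_⟩, by positivity, by nlinarith⟩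
      calc r * v ≤ r * r⁻¹ := by nlinarith
        _ = 1 := mul_inv_cancel₀ hr.ne'
    · rintro ⟨⟨hv0, hv1⟩, hu0, hu1⟩
      refine ⟨⟨?_, ?_⟩, ?_, ?_⟩
      · nlinarith
      · nlinarith
      · nlinarith
      · rw [← mul_le_mul_iff_right₀ hr]
        calc r * v ≤ 1 := hv1
          _ = r * r⁻¹ := (mul_inv_cancel₀ hr.ne').symm
  refine ⟨{ m := T.m
            px := fun k => T.py k / r
            py := fun k => T.px k / r
            w := fun k => T.h k / r
            h := fun k => T.w k / r
            w_pos := fun k => div_pos (T.h_pos k) hr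
            h_pos := fun k => div_pos (T.w_pos k) hr
            cover := ?_
            disj := ?_ }, fun k => ⟨k, rfl, rfl⟩, fun k => ⟨k, rfl, rfl⟩⟩
  · ext q
    obtain ⟨u, v⟩ := q
    rw [hmem u v, T.cover]
    simp only [Set.mem_iUnion, Set.mem_prod, Set.mem_Icc]
    constructor
    · rintro ⟨k, ⟨h1, h2⟩, h3, h4⟩
      refine ⟨k, ⟨?_, ?_⟩, ?_, ?_⟩
      · rw [div_le_iff₀ hr] at *; linarith
      · rw [← add_div, le_div_iff₀ hr]; linarith
      · rw [div_le_iff₀ hr]; linarith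
      · rw [← add_div, le_div_iff₀ hr]; linarith
    · rintro ⟨k, ⟨h1, h2⟩, h3, h4⟩
      rw [div_le_iff₀ hr] at h1 h3
      rw [← add_div, le_div_iff₀ hr] at h2 h4
      exact ⟨k, ⟨by linarith, by linarith⟩, by linarith, by linarith⟩
  · intro k l hkl
    have := T.disj k l hkl
    rw [Set.disjoint_left] at this ⊢
    rintro ⟨u, v⟩ hq hq'
    simp only [Set.mem_prod, Set.mem_Ioo] at hq hq'
    refine this (a := ((r * v, r * u) : ℝ × ℝ)) ?_ ?_
    · obtain ⟨⟨h1, h2⟩, h3, h4⟩ := hq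
      rw [div_lt_iff₀ hr] at h1 h3
      rw [← add_div, lt_div_iff₀ hr] at h2 h4
      exact Set.mem_prod.2 ⟨Set.mem_Ioo.2 ⟨by dsimp only; linarith, by dsimp only; linarith⟩,
        Set.mem_Ioo.2 ⟨by dsimp only; linarith, by dsimp only; linarith⟩⟩
    · obtain ⟨⟨h1, h2⟩, h3, h4⟩ := hq'
      rw [div_lt_iff₀ hr] at h1 h3
      rw [← add_div, lt_div_iff₀ hr] at h2 h4
      exact Set.mem_prod.2 ⟨Set.mem_Ioo.2 ⟨by dsimp only; linarith, by dsimp only; linarith⟩,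
        Set.mem_Ioo.2 ⟨by dsimp only; linarith, by dsimp only; linarith⟩⟩

/-- `r > 0` and the `[0,1]×[0,r]` rectangle can be tiled by tiles all of whose
aspect ratios (in some orientation) satisfy `P`. -/
def TP (P : ℝ → Prop) (r : ℝ) : Prop :=
  0 < r ∧ ∃ T : RectTiling r, ∀ k, P (T.h k / T.w k) ∨ P (T.w k / T.h k)

lemma TP_single {P : ℝ → Prop} {x : ℝ} (hP : P x) (hx : 0 < x) : TP P x := by
  refine ⟨hx, singleTiling x hx, fun k => Or.inl ?_⟩
  show P (x / 1)
  rwa [div_one]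

lemma TP_add {P : ℝ → Prop} {r₁ r₂ : ℝ} (h₁ : TP P r₁) (h₂ : TP P r₂) :
    TP P (r₁ + r₂) := by
  obtain ⟨hr₁, T₁, hT₁⟩ := h₁
  obtain ⟨hr₂, T₂, hT₂⟩ := h₂
  obtain ⟨T, hall, -, -⟩ := stack_tiling hr₁.le hr₂.le T₁ T₂
  refine ⟨by linarith, T, fun k => ?_⟩
  rcases hall k with ⟨k₁, hw, hh⟩ | ⟨k₂, hw, hh⟩
  · rw [hw, hh]; exact hT₁ k₁
  · rw [hw, hh]; exact hT₂ k₂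

lemma TP_inv {P : ℝ → Prop} {r : ℝ} (h : TP P r) : TP P r⁻¹ := by
  obtain ⟨hr, T, hT⟩ := h
  obtain ⟨T', hall, -⟩ := rot_tiling hr T
  refine ⟨by positivity, T', fun k => ?_⟩
  obtain ⟨k₀, hw, hh⟩ := hall k
  have hwk : T.w k₀ ≠ 0 := (T.w_pos k₀).ne'
  have hhk : T.h k₀ ≠ 0 := (T.h_pos k₀).ne'
  have hrne : r ≠ 0 := hr.ne'
  have e1 : T'.h k / T'.w k = T.w k₀ / T.h k₀ := by
    rw [hw, hh]; field_simp
  have e2 : T'.w k / T'.h k = T.h k₀ / T.w k₀ := by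
    rw [hw, hh]; field_simp
  rw [e1, e2]
  exact (hT k₀).symm

lemma TP_nat_mul {P : ℝ → Prop} {r : ℝ} (h : TP P r) :
    ∀ m : ℕ, 0 < m → TP P (m * r) := by
  intro m hm
  induction m with
  | zero => exact absurd hm (lt_irrefl 0)
  | succ m ih =>
    rcases Nat.eq_zero_or_pos m with hm0 | hm0
    · subst hm0; simpa using h
    · have := TP_add (ih hm0) h
      have he : ((m : ℝ) + 1) * r = m * r + r := by ring
      rw [Nat.cast_succ, he]
      exact this

lemma TP_rat_mul {P : ℝ → Prop} {r : ℝ} (h : TP P r) (q : ℚ) (hq : 0 < q) :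
    TP P ((q : ℝ) * r) := by
  have hr := h.1
  have hden : 0 < (q.den : ℕ) := q.pos
  have hnum : 0 < q.num := Rat.num_pos.2 hq
  -- (q:ℝ) * r = q.num.toNat * ((q.den * r⁻¹)⁻¹)
  have h1 : TP P ((q.den : ℝ) * r⁻¹) := TP_nat_mul (TP_inv h) q.den hden
  have h2 : TP P (((q.den : ℝ) * r⁻¹)⁻¹) := TP_inv h1
  have h3 : TP P ((q.num.toNat : ℝ) * ((q.den : ℝ) * r⁻¹)⁻¹) :=
    TP_nat_mul h2 q.num.toNat (by omega)
  have he : ((q.num.toNat : ℝ)) * ((q.den : ℝ) * r⁻¹)⁻¹ = (q : ℝ) * r := by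
    have hcast : ((q.num.toNat : ℝ)) = (q.num : ℝ) := by
      exact_mod_cast congrArg (Int.cast : ℤ → ℝ) (Int.toNat_of_nonneg hnum.le)
    have hd : (q.den : ℝ) ≠ 0 := by positivity
    rw [hcast, mul_inv, inv_inv, Rat.cast_def]
    field_simp
  rwa [he] at h3

section NumberTheory

variable {P : ℝ → Prop} {p : ℚ} {sp : ℝ}

/-- Every positive rational is `TP P`, given one totally positive ratio in `P`. -/
lemma TP_rat_of_pos (hsp : 0 < sp) (hsp2 : sp * sp = (p : ℝ)) (c d : ℚ)
    (hPy : P ((c:ℝ) + (d:ℝ) * sp)) (hy0 : 0 < (c:ℝ) + (d:ℝ) * sp)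
    (hyc : 0 < (c:ℝ) - (d:ℝ) * sp) :
    ∀ q : ℚ, 0 < q → TP P ((q:ℝ)) := by
  intro q hq
  have hc : (0:ℝ) < (c:ℝ) := by linarith
  have hcq : 0 < c := by exact_mod_cast hc
  set N : ℚ := c^2 - p * d^2 with hNdef
  have hNR : ((N:ℚ):ℝ) = ((c:ℝ) + (d:ℝ)*sp) * ((c:ℝ) - (d:ℝ)*sp) := by
    rw [hNdef]
    push_cast
    linear_combination ((d:ℝ)^2) * hsp2
  have hN : 0 < N := by
    have : (0:ℝ) < ((N:ℚ):ℝ) := by rw [hNR]; exact mul_pos hy0 hyc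
    exact_mod_cast this
  have hy : TP P ((c:ℝ) + (d:ℝ) * sp) := TP_single hPy hy0
  have h2 : TP P ((N:ℝ) * ((c:ℝ) + (d:ℝ) * sp)⁻¹) := TP_rat_mul (TP_inv hy) N hN
  have h3 : TP P (((c:ℝ) + (d:ℝ) * sp) + (N:ℝ) * ((c:ℝ) + (d:ℝ) * sp)⁻¹) := TP_add hy h2
  have he : ((c:ℝ) + (d:ℝ) * sp) + (N:ℝ) * ((c:ℝ) + (d:ℝ) * sp)⁻¹ = ((2*c : ℚ) : ℝ) := by
    have hne : ((c:ℝ) + (d:ℝ) * sp) ≠ 0 := hy0.ne'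
    rw [hNR]
    push_cast
    field_simp
    ring
  rw [he] at h3
  have h4 : TP P ((q / (2*c) : ℚ) * ((2*c : ℚ) : ℝ)) :=
    TP_rat_mul h3 (q / (2*c)) (by positivity)
  have he2 : ((q / (2*c) : ℚ) : ℝ) * ((2*c : ℚ) : ℝ) = (q : ℝ) := by
    rw [← Rat.cast_mul]
    congr 1
    field_simp
  rwa [he2] at h4

/-- The key construction step: `z = t/(s+x) + r`. -/
lemma TP_step (hsp : 0 < sp) (hsp2 : sp * sp = (p : ℝ)) (a b c d : ℚ)
    (hPx : P ((a:ℝ) + (b:ℝ) * sp)) (hx0 : 0 < (a:ℝ) + (b:ℝ) * sp)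
    (hPy : P ((c:ℝ) + (d:ℝ) * sp)) (hy0 : 0 < (c:ℝ) + (d:ℝ) * sp)
    (hyc : 0 < (c:ℝ) - (d:ℝ) * sp)
    (hb : 0 < b) (e f s : ℚ) (hs : 0 < s)
    (hN : f * ((s+a)^2 - p*b^2) < 0)
    (hr : 0 < e + f*(s+a)/b) :
    TP P ((e:ℝ) + (f:ℝ) * sp) := by
  set N : ℚ := (s+a)^2 - p*b^2 with hNdef
  set t : ℚ := -f * N / b with htdef
  set r : ℚ := e + f*(s+a)/b with hrdef
  have ht : 0 < t := by
    rw [htdef]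
    have h1 : 0 < -f * N := by nlinarith
    positivity
  -- the tiling chain
  have hTs : TP P ((s:ℝ)) := TP_rat_of_pos hsp hsp2 c d hPy hy0 hyc s hs
  have hTx : TP P ((a:ℝ) + (b:ℝ) * sp) := TP_single hPx hx0
  have hTsx : TP P ((s:ℝ) + ((a:ℝ) + (b:ℝ) * sp)) := TP_add hTs hTx
  have hTinv : TP P (((s:ℝ) + ((a:ℝ) + (b:ℝ) * sp))⁻¹) := TP_inv hTsx
  have hTt : TP P ((t:ℝ) * ((s:ℝ) + ((a:ℝ) + (b:ℝ) * sp))⁻¹) := TP_rat_mul hTinv t ht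
  have hTr : TP P ((r:ℝ)) := TP_rat_of_pos hsp hsp2 c d hPy hy0 hyc r hr
  have hT : TP P ((t:ℝ) * ((s:ℝ) + ((a:ℝ) + (b:ℝ) * sp))⁻¹ + (r:ℝ)) := TP_add hTt hTr
  have hNne : N ≠ 0 := by
    intro h0
    rw [h0, mul_zero] at hN
    exact lt_irrefl 0 hN
  have he : (t:ℝ) * ((s:ℝ) + ((a:ℝ) + (b:ℝ) * sp))⁻¹ + (r:ℝ) = (e:ℝ) + (f:ℝ) * sp := by
    have hsxpos : (0:ℝ) < (s:ℝ) + ((a:ℝ) + (b:ℝ) * sp) := by positivity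
    have hsx : ((s:ℝ) + ((a:ℝ) + (b:ℝ) * sp)) ≠ 0 := hsxpos.ne'
    have hbR : (b:ℝ) ≠ 0 := by positivity
    have hNR : ((N:ℚ):ℝ) =
        ((s:ℝ) + ((a:ℝ) + (b:ℝ) * sp)) * (((s:ℝ) + (a:ℝ)) - (b:ℝ) * sp) := by
      rw [hNdef]
      push_cast
      linear_combination ((b:ℝ)^2) * hsp2
    have hNRne : ((N:ℚ):ℝ) ≠ 0 := by exact_mod_cast hNne
    have hinv : ((s:ℝ) + ((a:ℝ) + (b:ℝ) * sp))⁻¹ =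
        (((s:ℝ) + (a:ℝ)) - (b:ℝ) * sp) / ((N:ℚ):ℝ) := by
      rw [eq_div_iff hNRne, hNR, inv_mul_cancel_left₀ hsx]
    rw [hinv, htdef, hrdef]
    push_cast
    field_simp
    ring
  rwa [he] at hT

/-- Main number-theoretic lemma: every positive element of `ℚ(√p)` is `TP P`. -/
lemma TP_main (hsp : 0 < sp) (hsp2 : sp * sp = (p : ℝ)) (hirr : Irrational sp)
    (a b c d : ℚ)
    (hPx : P ((a:ℝ) + (b:ℝ) * sp)) (hx0 : 0 < (a:ℝ) + (b:ℝ) * sp)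
    (hxc : (a:ℝ) - (b:ℝ) * sp < 0)
    (hPy : P ((c:ℝ) + (d:ℝ) * sp)) (hy0 : 0 < (c:ℝ) + (d:ℝ) * sp)
    (hyc : 0 < (c:ℝ) - (d:ℝ) * sp) :
    ∀ e f : ℚ, 0 < (e:ℝ) + (f:ℝ) * sp → TP P ((e:ℝ) + (f:ℝ) * sp) := by
  intro e f hz
  have hbR : 0 < (b:ℝ) := by nlinarith
  have hb : 0 < b := by exact_mod_cast hbR
  rcases lt_trichotomy f 0 with hf | hf | hf
  · -- f < 0 : choose s with b√p - a < s < e*b/(-f) - a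
    have hfR : ((f:ℚ):ℝ) < 0 := by exact_mod_cast hf
    have hlo : (0:ℝ) < (b:ℝ)*sp - (a:ℝ) := by linarith
    have hlohi : (b:ℝ)*sp - (a:ℝ) < ((e*b/(-f) - a : ℚ) : ℝ) := by
      push_cast
      have h0 : (0:ℝ) < -(f:ℝ) := by exact_mod_cast neg_pos.2 hf
      rw [sub_lt_sub_iff_right, lt_div_iff₀ h0]
      nlinarith
    obtain ⟨s, hs1, hs2⟩ := exists_rat_btwn hlohi
    have hs1' : (b:ℝ)*sp - (a:ℝ) < (s:ℝ) := hs1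
    have hspos : 0 < s := by
      have : (0:ℝ) < (s:ℝ) := by linarith
      exact_mod_cast this
    have hsaR : (b:ℝ)*sp < (s:ℝ) + (a:ℝ) := by linarith
    have hN : f * ((s+a)^2 - p*b^2) < 0 := by
      have hNR : (0:ℝ) < (((s+a)^2 - p*b^2 : ℚ) : ℝ) := by
        push_cast
        nlinarith [hsp2, hx0]
      have hN' : (0:ℚ) < (s+a)^2 - p*b^2 := by exact_mod_cast hNR
      nlinarith
    have hr : 0 < e + f*(s+a)/b := by
      have h2 : (s:ℚ) < e*b/(-f) - a := by exact_mod_cast hs2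
      rw [lt_sub_iff_add_lt, lt_div_iff₀ (neg_pos.2 hf)] at h2
      have h3 : 0 < e*b + f*(s+a) := by nlinarith
      have h4 : e + f*(s+a)/b = (e*b + f*(s+a))/b := by field_simp
      rw [h4]
      positivity
    exact TP_step hsp hsp2 a b c d hPx hx0 hPy hy0 hyc hb e f s hspos hN hr
  · -- f = 0 : rational case
    subst hf
    have he : (0:ℝ) < (e:ℝ) := by push_cast at hz ⊢; linarith
    have heq : 0 < e := by exact_mod_cast he
    have := TP_rat_of_pos hsp hsp2 c d hPy hy0 hyc e heq
    simpa using this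
  · -- f > 0 : choose s with max 0 ((-e/f)*b - a) < s < b√p - a
    have hfR : (0:ℝ) < (f:ℝ) := by exact_mod_cast hf
    have hhi : ((((-e)/f)*b - a : ℚ) : ℝ) < (b:ℝ)*sp - (a:ℝ) := by
      push_cast
      have : (-(e:ℝ))/(f:ℝ) < sp := by
        rw [div_lt_iff₀ hfR]
        nlinarith
      nlinarith
    have hhi0 : (0:ℝ) < (b:ℝ)*sp - (a:ℝ) := by linarith
    obtain ⟨s, hs1, hs2⟩ := exists_rat_btwn (max_lt hhi0 hhi :
      max (0:ℝ) ((((-e)/f)*b - a : ℚ) : ℝ) < (b:ℝ)*sp - (a:ℝ))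
    have hspos : 0 < s := by
      have : (0:ℝ) < (s:ℝ) := lt_of_le_of_lt (le_max_left _ _) hs1
      exact_mod_cast this
    have hsa1 : (s:ℝ) + (a:ℝ) < (b:ℝ)*sp := by linarith
    have hsa2 : -((b:ℝ)*sp) < (s:ℝ) + (a:ℝ) := by
      have : (0:ℝ) < (s:ℝ) := lt_of_le_of_lt (le_max_left _ _) hs1
      nlinarith
    have hN : f * ((s+a)^2 - p*b^2) < 0 := by
      have hNR : (((s+a)^2 - p*b^2 : ℚ) : ℝ) < 0 := by
        push_cast
        nlinarith [hsp2]
      have hN' : ((s+a)^2 - p*b^2 : ℚ) < 0 := by exact_mod_cast hNR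
      nlinarith
    have hr : 0 < e + f*(s+a)/b := by
      have h2 : ((((-e)/f)*b - a : ℚ) : ℝ) < (s:ℝ) := lt_of_le_of_lt (le_max_right _ _) hs1
      have h2' : ((-e)/f)*b - a < s := by exact_mod_cast h2
      have h3 : ((-e)/f)*b < s + a := by linarith
      have h4 : -e * b < f * (s+a) := by
        have := mul_lt_mul_of_pos_left h3 hf
        calc -e * b = f * (((-e)/f)*b) := by field_simp
          _ < f * (s+a) := this
      have h5 : 0 < e*b + f*(s+a) := by nlinarith
      have h6 : e + f*(s+a)/b = (e*b + f*(s+a))/b := by field_simp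
      rw [h6]
      positivity
    exact TP_step hsp hsp2 a b c d hPx hx0 hPy hy0 hyc hb e f s hspos hN hr

end NumberTheory

lemma ratio_transfer {r r' : ℝ} (T : RectTiling r) (T' : RectTiling r')
    (k : Fin T.m) (k' : Fin T'.m)
    (hw : T'.w k' = T.w k) (hh : T'.h k' = T.h k) (x : ℝ)
    (h : T.ratioOK k x) : T'.ratioOK k' x := by
  unfold RectTiling.ratioOK at *
  rw [hw, hh]
  exact h


theorem diverse_tiling_exists_mixed_case (p : ℚ) (hp : 0 < p)
    (hirr : Irrational (Real.sqrt p))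
    (n : ℕ) (hn : 2 ≤ n) (a b : Fin n → ℚ) (X : Fin n → ℝ)
    (hX : ∀ i, X i = (a i : ℝ) + (b i : ℝ) * Real.sqrt p)
    (hXpos : ∀ i, 0 < X i)
    (hmix : ∃ i j, ((a i : ℝ) - (b i : ℝ) * Real.sqrt p) *
        ((a j : ℝ) - (b j : ℝ) * Real.sqrt p) < 0)
    (e f : ℚ) (z : ℝ) (hz : z = (e : ℝ) + (f : ℝ) * Real.sqrt p) (hzpos : 0 < z) :
    DiverselyTileable z X := by
  set sp := Real.sqrt p with hspdef
  have hppos : (0:ℝ) < (p:ℝ) := by exact_mod_cast hp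
  have hsp : 0 < sp := Real.sqrt_pos.2 hppos
  have hsp2 : sp * sp = (p:ℝ) := Real.mul_self_sqrt hppos.le
  -- extract indices with mixed conjugates
  obtain ⟨i₀, j₀, hij⟩ := hmix
  have hex : ∃ I J : Fin n, ((a I:ℝ) - (b I:ℝ) * sp) < 0 ∧ 0 < ((a J:ℝ) - (b J:ℝ) * sp) := by
    rcases lt_trichotomy ((a i₀:ℝ) - (b i₀:ℝ) * sp) 0 with h | h | h
    · exact ⟨i₀, j₀, h, by nlinarith⟩
    · rw [h, zero_mul] at hij; exact absurd hij (lt_irrefl 0)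
    · exact ⟨j₀, i₀, by nlinarith, h⟩
  obtain ⟨I, J, hIc, hJc⟩ := hex
  have hPx : (fun t => ∃ i, t = X i) ((a I:ℝ) + (b I:ℝ) * sp) := ⟨I, (hX I).symm⟩
  have hx0 : 0 < (a I:ℝ) + (b I:ℝ) * sp := by rw [← hX I]; exact hXpos I
  have hPy : (fun t => ∃ i, t = X i) ((a J:ℝ) + (b J:ℝ) * sp) := ⟨J, (hX J).symm⟩
  have hy0 : 0 < (a J:ℝ) + (b J:ℝ) * sp := by rw [← hX J]; exact hXpos J
  have HTP : ∀ e' f' : ℚ, 0 < (e':ℝ) + (f':ℝ) * sp →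
      TP (fun t => ∃ i, t = X i) ((e':ℝ) + (f':ℝ) * sp) :=
    TP_main hsp hsp2 hirr (a I) (b I) (a J) (b J) hPx hx0 hIc hPy hy0 hJc
  -- choose m
  have hnempty : Nonempty (Fin n) := ⟨⟨0, by omega⟩⟩
  have hSpos : 0 < ∑ i, X i :=
    Finset.sum_pos (fun i _ => hXpos i) Finset.univ_nonempty
  obtain ⟨m, hm⟩ := exists_nat_gt ((∑ i, X i) / z)
  have hm0 : 0 < m := by
    rcases Nat.eq_zero_or_pos m with h0 | h0
    · exfalso
      rw [h0] at hm
      have : 0 < (∑ i, X i) / z := by positivity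
      simp at hm
      linarith
    · exact h0
  have hmR : (0:ℝ) < (m:ℝ) := by exact_mod_cast hm0
  have hmQ : (0:ℚ) < (1 / (m:ℚ)) := by
    have : (0:ℚ) < (m:ℚ) := by exact_mod_cast hm0
    positivity
  set c : ℚ := 1 / (m:ℚ) with hcdef
  have hcR : ((c:ℚ):ℝ) = 1 / (m:ℝ) := by rw [hcdef]; push_cast; ring
  have hcpos : (0:ℝ) < ((c:ℚ):ℝ) := by rw [hcR]; positivity
  set zr : ℝ := z - ((c:ℚ):ℝ) * ∑ i, X i with hzrdef
  have hzrpos : 0 < zr := by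
    have h2 : (∑ i, X i) < (m:ℝ) * z := by
      have h1 := (div_lt_iff₀ hzpos).1 hm
      nlinarith
    rw [hzrdef, sub_pos, hcR, one_div, ← div_eq_inv_mul, div_lt_iff₀ hmR]
    nlinarith
  have hsum : ∑ i, X i = ((∑ i, a i : ℚ):ℝ) + ((∑ i, b i : ℚ):ℝ) * sp := by
    push_cast
    calc ∑ i, X i = ∑ i, ((a i:ℝ) + (b i:ℝ) * sp) :=
          Finset.sum_congr rfl (fun i _ => hX i)
      _ = (∑ i, (a i:ℝ)) + (∑ i, (b i:ℝ)) * sp := by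
          rw [Finset.sum_add_distrib, Finset.sum_mul]
  have hzr : zr = ((e - c * ∑ i, a i : ℚ):ℝ) + ((f - c * ∑ i, b i : ℚ):ℝ) * sp := by
    rw [hzrdef, hz, hsum]
    push_cast
    ring
  have HTzr : TP (fun t => ∃ i, t = X i) zr := by
    rw [hzr]
    exact HTP _ _ (hzr ▸ hzrpos)
  have HTstrip : ∀ i : Fin n, TP (fun t => t = X i) (((c:ℚ):ℝ) * X i) :=
    fun i => TP_rat_mul (TP_single (P := fun t => t = X i) rfl (hXpos i)) c hmQ
  set G : ℕ → ℝ := fun i => if h : i < n then ((c:ℚ):ℝ) * X ⟨i, h⟩ else 0 with hGdef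
  have hGnn : ∀ i, 0 ≤ G i := by
    intro i
    simp only [hGdef]
    by_cases h : i < n
    · rw [dif_pos h]
      have := hXpos ⟨i, h⟩
      positivity
    · rw [dif_neg h]
  have key : ∀ j : ℕ, j ≤ n →
      ∃ T : RectTiling (zr + ∑ i ∈ Finset.range j, G i),
        (∀ k, ∃ i, T.ratioOK k (X i)) ∧
        (∀ i : Fin n, (i:ℕ) < j → ∃ k, T.ratioOK k (X i)) := by
    intro j
    induction j with
    | zero =>
      intro _
      rw [Finset.sum_range_zero, add_zero]
      obtain ⟨-, T, hT⟩ := HTzr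
      refine ⟨T, fun k => ?_, fun i hi => absurd hi (Nat.not_lt_zero _)⟩
      rcases hT k with ⟨i, hi⟩ | ⟨i, hi⟩
      · exact ⟨i, Or.inl hi⟩
      · exact ⟨i, Or.inr hi⟩
    | succ j ih =>
      intro hj1
      have hj : j < n := hj1
      obtain ⟨T₁, hT₁all, hT₁wit⟩ := ih (Nat.le_of_succ_le hj1)
      have hGj : G j = ((c:ℚ):ℝ) * X ⟨j, hj⟩ := by simp only [hGdef]; rw [dif_pos hj]
      have h2 := HTstrip ⟨j, hj⟩
      rw [← hGj] at h2
      obtain ⟨hGjpos, T₂, hT₂⟩ := h2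
      have hr1 : (0:ℝ) ≤ zr + ∑ i ∈ Finset.range j, G i := by
        have : (0:ℝ) ≤ ∑ i ∈ Finset.range j, G i :=
          Finset.sum_nonneg (fun i _ => hGnn i)
        linarith
      obtain ⟨T, hcor, hw1, hw2⟩ := stack_tiling hr1 hGjpos.le T₁ T₂
      rw [Finset.sum_range_succ, ← add_assoc]
      refine ⟨T, ?_, ?_⟩
      · intro k
        rcases hcor k with ⟨k₁, hwk, hhk⟩ | ⟨k₂, hwk, hhk⟩
        · obtain ⟨i, hi⟩ := hT₁all k₁
          exact ⟨i, ratio_transfer T₁ T k₁ k hwk hhk _ hi⟩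
        · have hOK : T₂.ratioOK k₂ (X ⟨j, hj⟩) := hT₂ k₂
          exact ⟨⟨j, hj⟩, ratio_transfer T₂ T k₂ k hwk hhk _ hOK⟩
      · intro i hi
        rcases Nat.lt_or_ge (i:ℕ) j with hlt | hge
        · obtain ⟨k₁, hk₁⟩ := hT₁wit i hlt
          obtain ⟨k, hwk, hhk⟩ := hw1 k₁
          exact ⟨k, ratio_transfer T₁ T k₁ k hwk hhk _ hk₁⟩
        · have hvij : (i:ℕ) = j := by omega
          have hij : (⟨j, hj⟩ : Fin n) = i := by
            apply Fin.ext
            simp [hvij]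
          obtain ⟨k₂, -⟩ := T₂.m_pos hGjpos.le
          obtain ⟨k, hwk, hhk⟩ := hw2 k₂
          have hOK : T₂.ratioOK k₂ (X ⟨j, hj⟩) := hT₂ k₂
          rw [hij] at hOK
          exact ⟨k, ratio_transfer T₂ T k₂ k hwk hhk _ hOK⟩
  have hGsum : ∑ i ∈ Finset.range n, G i = ((c:ℚ):ℝ) * ∑ i, X i := by
    rw [← Fin.sum_univ_eq_sum_range G n, Finset.mul_sum]
    refine Finset.sum_congr rfl (fun i _ => ?_)
    simp only [hGdef]
    rw [dif_pos i.isLt]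
  have heq : zr + ∑ i ∈ Finset.range n, G i = z := by
    rw [hGsum, hzrdef]
    ring
  have hkey := key n le_rfl
  rw [heq] at hkey
  obtain ⟨T, hall, hwit⟩ := hkey
  exact ⟨T, hall, fun i => hwit i i.isLt⟩
end

section
/- Let p be a positive rational with √p irrational, and let x₁ = a₁ + b₁√p, …, xₙ = aₙ + bₙ√p (n ≥ 2) with all aᵢ, bᵢ ∈ ℚ, all xᵢ > 0, and such that xᵢ/xⱼ ∉ ℚ and xᵢ·xⱼ ∉ ℚ whenever i ≠ j. Suppose aᵢ − bᵢ√p > 0 for all i, and let z = e + f√p > 0 with e, f ∈ ℚ, e > 0 and |f|/e = max_{1 ≤ i ≤ n} |bᵢ|/aᵢ. Then the rectangle of aspect ratio z admits NO diverse tiling by rectangles with aspect ratios x₁, …, xₙ. -/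
set_option maxHeartbeats 1000000
set_option synthInstance.maxHeartbeats 400000

noncomputable section

namespace NDT

variable (p : ℚ)

def inK (x : ℝ) : Prop := ∃ a b : ℚ, x = (a : ℝ) + (b : ℝ) * Real.sqrt p

variable {p}

lemma rep_unique (hirr : Irrational (Real.sqrt p)) {a b c d : ℚ}
    (h : (a : ℝ) + (b : ℝ) * Real.sqrt p = (c : ℝ) + (d : ℝ) * Real.sqrt p) :
    a = c ∧ b = d := by
  by_cases hbd : b = d
  · subst hbd
    refine ⟨?_, rfl⟩
    exact_mod_cast add_right_cancel h
  · exfalso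
    apply hirr
    refine ⟨(a - c) / (d - b), ?_⟩
    have hdb : ((d : ℝ) - b) ≠ 0 := by
      intro h0
      have h0' : (d : ℝ) = (b : ℝ) := sub_eq_zero.mp h0
      exact hbd (by exact_mod_cast h0'.symm)
    push_cast
    rw [div_eq_iff hdb]
    linarith [h]

open Classical in
variable (p) in
def conj (x : ℝ) : ℝ :=
  if h : inK p x then (h.choose : ℝ) - (h.choose_spec.choose : ℝ) * Real.sqrt p else 0

lemma conj_spec (hirr : Irrational (Real.sqrt p)) (a b : ℚ) :
    conj p ((a : ℝ) + (b : ℝ) * Real.sqrt p) = (a : ℝ) - (b : ℝ) * Real.sqrt p := by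
  have h : inK p ((a : ℝ) + (b : ℝ) * Real.sqrt p) := ⟨a, b, rfl⟩
  rw [conj, dif_pos h]
  obtain ⟨h1, h2⟩ := rep_unique hirr h.choose_spec.choose_spec.symm
  rw [h2, h1]

lemma sqrtp_pos (hp : 0 < p) : 0 < Real.sqrt p := Real.sqrt_pos.mpr (by exact_mod_cast hp)

lemma sqrtp_sq (hp : 0 < p) : Real.sqrt p * Real.sqrt p = (p : ℝ) :=
  Real.mul_self_sqrt (by exact_mod_cast hp.le)

lemma conj_add (hirr : Irrational (Real.sqrt p)) {x y : ℝ} (hx : inK p x) (hy : inK p y) :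
    conj p (x + y) = conj p x + conj p y := by
  obtain ⟨a, b, rfl⟩ := hx; obtain ⟨c, d, rfl⟩ := hy
  have h1 : (a : ℝ) + b * Real.sqrt p + ((c : ℝ) + d * Real.sqrt p)
      = ((a + c : ℚ) : ℝ) + ((b + d : ℚ) : ℝ) * Real.sqrt p := by push_cast; ring
  rw [h1, conj_spec hirr, conj_spec hirr, conj_spec hirr]
  push_cast; ring

lemma conj_mul (hp : 0 < p) (hirr : Irrational (Real.sqrt p)) {x y : ℝ}
    (hx : inK p x) (hy : inK p y) :
    conj p (x * y) = conj p x * conj p y := by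
  obtain ⟨a, b, rfl⟩ := hx; obtain ⟨c, d, rfl⟩ := hy
  have hs := sqrtp_sq hp
  have h1 : ((a : ℝ) + b * Real.sqrt p) * ((c : ℝ) + d * Real.sqrt p)
      = ((a * c + b * d * p : ℚ) : ℝ) + ((a * d + b * c : ℚ) : ℝ) * Real.sqrt p := by
    push_cast
    linear_combination ((b : ℝ) * (d : ℝ)) * hs
  rw [h1, conj_spec hirr, conj_spec hirr, conj_spec hirr]
  push_cast
  linear_combination (-(b : ℝ) * (d : ℝ)) * hs

lemma conj_zero (hirr : Irrational (Real.sqrt p)) : conj p 0 = 0 := by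
  have h1 : (0 : ℝ) = ((0:ℚ):ℝ) + ((0:ℚ):ℝ) * Real.sqrt p := by push_cast; ring
  conv_lhs => rw [h1]
  rw [conj_spec hirr]; push_cast; ring

lemma conj_one (hirr : Irrational (Real.sqrt p)) : conj p 1 = 1 := by
  have h1 : (1 : ℝ) = ((1:ℚ):ℝ) + ((0:ℚ):ℝ) * Real.sqrt p := by push_cast; ring
  conv_lhs => rw [h1]
  rw [conj_spec hirr]; push_cast; ring

lemma conj_ne_zero (hp : 0 < p) (hirr : Irrational (Real.sqrt p)) {x : ℝ}
    (hx : inK p x) (hx0 : x ≠ 0) : conj p x ≠ 0 := by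
  obtain ⟨a, b, rfl⟩ := hx
  rw [conj_spec hirr]
  intro h0
  by_cases hb : b = 0
  · subst hb; simp at h0; apply hx0; simp [h0]
  · apply hirr
    refine ⟨a / b, ?_⟩
    have hb' : (b : ℝ) ≠ 0 := by exact_mod_cast hb
    push_cast
    rw [div_eq_iff hb']
    linarith [h0]

lemma inK_inv (hp : 0 < p) (hirr : Irrational (Real.sqrt p)) {x : ℝ}
    (hx : inK p x) (hx0 : x ≠ 0) : inK p x⁻¹ := by
  obtain ⟨a, b, rfl⟩ := hx
  have hc : ((a : ℝ) - b * Real.sqrt p) ≠ 0 := by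
    have h := conj_ne_zero hp hirr ⟨a, b, rfl⟩ hx0
    rwa [conj_spec hirr] at h
  have hs := sqrtp_sq hp
  have hprod : ((a : ℝ) + b * Real.sqrt p) * ((a : ℝ) - b * Real.sqrt p)
      = ((a^2 - b^2 * p : ℚ) : ℝ) := by
    push_cast; linear_combination (-(b:ℝ)*(b:ℝ)) * hs
  have hd : ((a^2 - b^2 * p : ℚ) : ℝ) ≠ 0 := by rw [← hprod]; exact mul_ne_zero hx0 hc
  refine ⟨a / (a^2 - b^2*p), -b / (a^2 - b^2*p), ?_⟩
  symm
  apply eq_inv_of_mul_eq_one_left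
  push_cast
  have hd' : (a:ℝ)^2 - (b:ℝ)^2 * p ≠ 0 := by push_cast at hd; exact hd
  field_simp
  linear_combination (-(b:ℝ)*(b:ℝ)) * hs

lemma conj_inv (hp : 0 < p) (hirr : Irrational (Real.sqrt p)) {x : ℝ}
    (hx : inK p x) (hx0 : x ≠ 0) : conj p x⁻¹ = (conj p x)⁻¹ := by
  have h1 : conj p (x * x⁻¹) = conj p x * conj p x⁻¹ :=
    conj_mul hp hirr hx (inK_inv hp hirr hx hx0)
  rw [mul_inv_cancel₀ hx0, conj_one hirr] at h1
  exact eq_inv_of_mul_eq_one_left (by rw [mul_comm]; exact h1.symm)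

lemma inK_ratCast (q : ℚ) : inK p ((q : ℝ)) := ⟨q, 0, by push_cast; ring⟩

lemma inK_mul {x y : ℝ} (hp : 0 < p) (hx : inK p x) (hy : inK p y) : inK p (x * y) := by
  obtain ⟨a, b, rfl⟩ := hx; obtain ⟨c, d, rfl⟩ := hy
  exact ⟨a*c + b*d*p, a*d + b*c, by push_cast; linear_combination ((b:ℝ)*(d:ℝ)) * (sqrtp_sq hp)⟩

end NDT

namespace NDT

variable (p : ℚ) (hp : 0 < p) (hirr : Irrational (Real.sqrt p))

def Kf : Subfield ℝ where
  carrier := {x | inK p x}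
  mul_mem' := fun hx hy => inK_mul hp hx hy
  one_mem' := ⟨1, 0, by push_cast; ring⟩
  add_mem' := by
    rintro x y ⟨a, b, rfl⟩ ⟨c, d, rfl⟩
    exact ⟨a + c, b + d, by push_cast; ring⟩
  zero_mem' := ⟨0, 0, by push_cast; ring⟩
  neg_mem' := by
    rintro x ⟨a, b, rfl⟩
    exact ⟨-a, -b, by push_cast; ring⟩
  inv_mem' := by
    intro x hx
    by_cases hx0 : x = 0
    · subst hx0; simp; exact ⟨0, 0, by push_cast; ring⟩
    · exact inK_inv hp hirr hx hx0

lemma mem_Kf {x : ℝ} : x ∈ Kf p hp hirr ↔ inK p x := Iff.rfl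

def liB : LinearIndepOn (Kf p hp hirr) id ({(1:ℝ)} : Set ℝ) :=
  LinearIndepOn.singleton one_ne_zero

def bas : Module.Basis ((liB p hp hirr).extend (Set.subset_univ _)) (Kf p hp hirr) ℝ :=
  Module.Basis.extend (liB p hp hirr)

def gmap (x : ℝ) : ℝ :=
  ((bas p hp hirr).repr x).sum fun i c => conj p (c : ℝ) * (i : ℝ)

lemma gmap_add (x y : ℝ) : gmap p hp hirr (x + y) = gmap p hp hirr x + gmap p hp hirr y := by
  unfold gmap
  rw [map_add]
  apply Finsupp.sum_add_index'
  · intro i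
    have : ((0 : Kf p hp hirr) : ℝ) = 0 := rfl
    rw [this, conj_zero hirr, zero_mul]
  · intro i c1 c2
    have : ((c1 + c2 : Kf p hp hirr) : ℝ) = (c1 : ℝ) + (c2 : ℝ) := rfl
    rw [this, conj_add hirr c1.2 c2.2, add_mul]

lemma gmap_mulK (y x : ℝ) (hy : inK p y) :
    gmap p hp hirr (y * x) = conj p y * gmap p hp hirr x := by
  unfold gmap
  have h1 : y * x = (⟨y, hy⟩ : Kf p hp hirr) • x := rfl
  rw [h1, map_smul]
  rw [Finsupp.sum_smul_index']
  · rw [Finsupp.mul_sum]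
    apply Finsupp.sum_congr
    intro i _
    have h2 : ((⟨y, hy⟩ : Kf p hp hirr) • ((bas p hp hirr).repr x i) : Kf p hp hirr) = 
        (⟨y, hy⟩ * ((bas p hp hirr).repr x i) : Kf p hp hirr) := rfl
    rw [h2]
    have h3 : (((⟨y, hy⟩ * ((bas p hp hirr).repr x i)) : Kf p hp hirr) : ℝ)
        = y * (((bas p hp hirr).repr x i : Kf p hp hirr)) := rfl
    rw [h3, conj_mul hp hirr hy ((bas p hp hirr).repr x i).2, mul_assoc]
  · intro i
    have : ((0 : Kf p hp hirr) : ℝ) = 0 := rfl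
    rw [this, conj_zero hirr, zero_mul]

lemma gmap_one : gmap p hp hirr 1 = 1 := by
  have h1 : (1:ℝ) ∈ (liB p hp hirr).extend (Set.subset_univ _) :=
    (liB p hp hirr).subset_extend _ rfl
  have h2 : bas p hp hirr ⟨1, h1⟩ = 1 := Module.Basis.extend_apply_self _ _
  have h4 : gmap p hp hirr (bas p hp hirr ⟨1, h1⟩) = 1 := by
    unfold gmap
    rw [Module.Basis.repr_self]
    rw [Finsupp.sum_single_index]
    · have h5 : ((1 : Kf p hp hirr) : ℝ) = 1 := rfl
      rw [h5, conj_one hirr]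
      simp
    · have h5 : ((0 : Kf p hp hirr) : ℝ) = 0 := rfl
      rw [h5, conj_zero hirr, zero_mul]
  rw [h2] at h4
  exact h4

lemma gmap_inK (x : ℝ) (hx : inK p x) : gmap p hp hirr x = conj p x := by
  have := gmap_mulK p hp hirr x 1 hx
  rw [mul_one, gmap_one] at this
  rw [this, mul_one]

end NDT

namespace NDT

lemma tele (F : ℝ → ℝ) (hF : ∀ x y, F (x + y) = F x + F y) (t : ℕ → ℝ) :
    ∀ a b : ℕ, a ≤ b → F (t b - t a) = ∑ i ∈ Finset.Ico a b, F (t (i+1) - t i) := by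
  intro a b hab
  induction b, hab using Nat.le_induction with
  | base =>
      have h0 : F 0 = 0 := by have := hF 0 0; simp at this; linarith
      simp [h0]
  | succ b hab ih =>
      rw [Finset.sum_Ico_succ_top hab, ← ih]
      have h1 : t (b+1) - t a = (t b - t a) + (t (b+1) - t b) := by ring
      rw [h1, hF]

lemma axis (F : ℝ → ℝ) (hF : ∀ x y, F (x + y) = F x + F y) {m : ℕ}
    (P W : Fin m → ℝ) (hW : ∀ k, 0 < W k) (c : ℝ)
    (hbound : ∀ k, 0 ≤ P k ∧ P k + W k ≤ c) (h0c : (0:ℝ) ≤ c) :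
    ∃ (M : ℕ) (t : ℕ → ℝ) (I : Fin m → Finset ℕ),
      (∀ k, F (W k) = ∑ i ∈ I k, F (t (i+1) - t i)) ∧
      (F c = ∑ i ∈ Finset.range M, F (t (i+1) - t i)) ∧
      (∀ i, i < M → 0 ≤ t i ∧ t i < t (i+1) ∧ t (i+1) ≤ c) ∧
      (∀ k i, i < M → P k ≤ (t i + t (i+1))/2 → (t i + t (i+1))/2 ≤ P k + W k → i ∈ I k) ∧
      (∀ k i, i ∈ I k → P k ≤ t i ∧ t (i+1) ≤ P k + W k ∧ i < M) := by
  classical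
  set s : Finset ℝ :=
    insert (0:ℝ) (insert c (Finset.univ.image P ∪ Finset.univ.image (fun k => P k + W k)))
    with hs
  have h0s : (0:ℝ) ∈ s := by simp [hs]
  have hcs : c ∈ s := by simp [hs]
  have hPs : ∀ k, P k ∈ s := by
    intro k
    have : P k ∈ Finset.univ.image P := Finset.mem_image_of_mem _ (Finset.mem_univ k)
    simp [hs]
  have hPWs : ∀ k, P k + W k ∈ s := by
    intro k
    have : P k + W k ∈ Finset.univ.image (fun k => P k + W k) :=
      Finset.mem_image_of_mem _ (Finset.mem_univ k)
    simp [hs]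
  have hsbound : ∀ x ∈ s, 0 ≤ x ∧ x ≤ c := by
    intro x hx
    simp [hs] at hx
    rcases hx with rfl | rfl | ⟨k, rfl⟩ | ⟨k, rfl⟩
    · exact ⟨le_refl _, h0c⟩
    · exact ⟨h0c, le_refl _⟩
    · exact ⟨(hbound k).1, by linarith [(hbound k).2, (hW k).le]⟩
    · exact ⟨by linarith [(hbound k).1, (hW k).le], (hbound k).2⟩
  set M : ℕ := s.card - 1 with hM
  have hcard : s.card = M + 1 := by
    have : 0 < s.card := Finset.card_pos.mpr ⟨0, h0s⟩
    omega
  set o := s.orderIsoOfFin hcard with ho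
  set t : ℕ → ℝ := fun i => if h : i < M + 1 then (o ⟨i, h⟩ : ℝ) else 0 with ht
  have tmem : ∀ i, i ≤ M → t i ∈ s := by
    intro i hi
    rw [ht]; simp only
    rw [dif_pos (by omega)]
    exact (o ⟨i, by omega⟩).2
  have tlt : ∀ i j, i ≤ M → j ≤ M → (t i < t j ↔ i < j) := by
    intro i j hi hj
    rw [ht]; simp only
    rw [dif_pos (by omega), dif_pos (by omega)]
    rw [Subtype.coe_lt_coe, o.lt_iff_lt, Fin.mk_lt_mk]
  have tle : ∀ i j, i ≤ M → j ≤ M → (t i ≤ t j ↔ i ≤ j) := by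
    intro i j hi hj
    constructor
    · intro h
      by_contra hc
      have := (tlt j i hj hi).mpr (by omega)
      linarith
    · intro h
      by_contra hc
      have := (tlt j i hj hi).mp (by linarith)
      omega
  have tsurj : ∀ x ∈ s, ∃ a, a ≤ M ∧ t a = x := by
    intro x hx
    obtain ⟨i, hi⟩ := o.surjective ⟨x, hx⟩
    refine ⟨i, by omega, ?_⟩
    rw [ht]; simp only
    rw [dif_pos i.isLt]
    have : o ⟨(i:ℕ), i.isLt⟩ = o i := by congr 1
    rw [this, hi]
  have ht0 : t 0 = 0 := by
    obtain ⟨a0, ha0, ha0'⟩ := tsurj 0 h0s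
    have h1 : t 0 ≤ t a0 := (tle 0 a0 (by omega) ha0).mpr (by omega)
    have h2 : 0 ≤ t 0 := (hsbound _ (tmem 0 (by omega))).1
    rw [ha0'] at h1
    linarith
  have htM : t M = c := by
    obtain ⟨a1, ha1, ha1'⟩ := tsurj c hcs
    have h1 : t a1 ≤ t M := (tle a1 M ha1 (by omega)).mpr ha1
    have h2 : t M ≤ c := (hsbound _ (tmem M (by omega))).2
    rw [ha1'] at h1
    linarith
  have hP := fun k => tsurj (P k) (hPs k)
  choose ax hax1 hax2 using hP
  have hPW := fun k => tsurj (P k + W k) (hPWs k)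
  choose bx hbx1 hbx2 using hPW
  have haxbx : ∀ k, ax k < bx k := by
    intro k
    have h1 : t (ax k) < t (bx k) := by rw [hax2, hbx2]; linarith [hW k]
    exact (tlt _ _ (hax1 k) (hbx1 k)).mp h1
  set I : Fin m → Finset ℕ :=
    fun k => (Finset.range M).filter (fun i => P k ≤ t i ∧ t (i+1) ≤ P k + W k) with hI
  have hIeq : ∀ k, I k = Finset.Ico (ax k) (bx k) := by
    intro k
    ext i
    simp only [hI, Finset.mem_filter, Finset.mem_range, Finset.mem_Ico]
    constructor
    · rintro ⟨hiM, h1, h2⟩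
      constructor
      · rw [← hax2 k] at h1
        exact (tle _ _ (hax1 k) (by omega)).mp h1
      · rw [← hbx2 k] at h2
        have := (tle _ _ (by omega) (hbx1 k)).mp h2
        omega
    · rintro ⟨h1, h2⟩
      have hiM : i < M := by
        have := hbx1 k
        omega
      refine ⟨hiM, ?_, ?_⟩
      · rw [← hax2 k]
        exact (tle _ _ (hax1 k) (by omega)).mpr h1
      · rw [← hbx2 k]
        exact (tle _ _ (by omega) (hbx1 k)).mpr h2
  refine ⟨M, t, I, ?_, ?_, ?_, ?_, ?_⟩
  · intro k
    rw [hIeq k]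
    have h1 := tele F hF t (ax k) (bx k) (haxbx k).le
    rw [hax2, hbx2] at h1
    have h2 : P k + W k - P k = W k := by ring
    rw [h2] at h1
    exact h1
  · have h1 := tele F hF t 0 M (by omega)
    rw [ht0, htM] at h1
    have h2 : c - 0 = c := by ring
    rw [h2] at h1
    rw [h1]
    rw [Finset.range_eq_Ico]
  · intro i hi
    refine ⟨(hsbound _ (tmem i (by omega))).1, (tlt i (i+1) (by omega) (by omega)).mpr (by omega),
      (hsbound _ (tmem (i+1) (by omega))).2⟩
  · intro k i hi hmid1 hmid2
    have hstep : t i < t (i+1) := (tlt i (i+1) (by omega) (by omega)).mpr (by omega)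
    have hm1 : t i < (t i + t (i+1))/2 := by linarith
    have hm2 : (t i + t (i+1))/2 < t (i+1) := by linarith
    simp only [hI, Finset.mem_filter, Finset.mem_range]
    refine ⟨hi, ?_, ?_⟩
    · rw [← hax2 k] at hmid1 ⊢
      have h1 : t (ax k) < t (i+1) := by linarith
      have h2 : ax k ≤ i := by
        have := (tlt _ _ (hax1 k) (by omega)).mp h1
        omega
      exact (tle _ _ (hax1 k) (by omega)).mpr h2
    · rw [← hbx2 k] at hmid2 ⊢
      have h1 : t i < t (bx k) := by linarith
      have h2 : i + 1 ≤ bx k := by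
        have := (tlt _ _ (by omega) (hbx1 k)).mp h1
        omega
      exact (tle _ _ (by omega) (hbx1 k)).mpr h2
  · intro k i hik
    simp only [hI, Finset.mem_filter, Finset.mem_range] at hik
    exact ⟨hik.2.1, hik.2.2, hik.1⟩

end NDT


namespace NDT

lemma dehn {r : ℝ} (hr : 0 < r) (T : RectTiling r) (F G : ℝ → ℝ)
    (hF : ∀ x y, F (x + y) = F x + F y) (hG : ∀ x y, G (x + y) = G x + G y) :
    ∑ k, F (T.w k) * G (T.h k) = F 1 * G r := by
  classical
  have hsub : ∀ k, (0 ≤ T.px k ∧ T.px k + T.w k ≤ 1) ∧ (0 ≤ T.py k ∧ T.py k + T.h k ≤ r) := by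
    intro k
    have h1 : (Set.Icc (T.px k) (T.px k + T.w k) ×ˢ Set.Icc (T.py k) (T.py k + T.h k)
        : Set (ℝ×ℝ)) ⊆ Set.Icc 0 1 ×ˢ Set.Icc 0 r := by
      rw [T.cover]
      exact Set.subset_iUnion
        (fun k => Set.Icc (T.px k) (T.px k + T.w k) ×ˢ Set.Icc (T.py k) (T.py k + T.h k)) k
    have hw := (T.w_pos k).le
    have hh := (T.h_pos k).le
    have hc1 := h1 (Set.mk_mem_prod
      (Set.left_mem_Icc.mpr (by linarith)) (Set.left_mem_Icc.mpr (by linarith)))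
    have hc2 := h1 (Set.mk_mem_prod
      (Set.right_mem_Icc.mpr (by linarith)) (Set.right_mem_Icc.mpr (by linarith)))
    simp only [Set.mem_prod, Set.mem_Icc] at hc1 hc2
    exact ⟨⟨hc1.1.1, hc2.1.2⟩, ⟨hc1.2.1, hc2.2.2⟩⟩
  obtain ⟨Mx, tx, Ix, hA1x, hA2x, hA4x, hA5x, hA6x⟩ :=
    axis F hF T.px T.w T.w_pos 1 (fun k => (hsub k).1) zero_le_one
  obtain ⟨Ny, ty, Iy, hA1y, hA2y, hA4y, hA5y, hA6y⟩ :=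
    axis G hG T.py T.h T.h_pos r (fun k => (hsub k).2) hr.le
  -- each cell lies in exactly one tile
  have hex : ∀ i j, i < Mx → j < Ny → ∃ k, i ∈ Ix k ∧ j ∈ Iy k := by
    intro i j hi hj
    set cx := (tx i + tx (i+1))/2 with hcx
    set cy := (ty j + ty (j+1))/2 with hcy
    obtain ⟨hx0, hx1, hx2⟩ := hA4x i hi
    obtain ⟨hy0, hy1, hy2⟩ := hA4y j hj
    have hmem : (cx, cy) ∈ (Set.Icc (0:ℝ) 1 ×ˢ Set.Icc (0:ℝ) r) := by
      constructor
      · simp only [Set.mem_Icc]; constructor <;> [skip; skip] <;> simp [hcx] <;> linarith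
      · simp only [Set.mem_Icc]; constructor <;> [skip; skip] <;> simp [hcy] <;> linarith
    rw [T.cover] at hmem
    obtain ⟨k, hk⟩ := Set.mem_iUnion.mp hmem
    simp only [Set.mem_prod, Set.mem_Icc] at hk
    exact ⟨k, hA5x k i hi hk.1.1 hk.1.2, hA5y k j hj hk.2.1 hk.2.2⟩
  have huniq : ∀ i j (k l : Fin T.m), i ∈ Ix k ∧ j ∈ Iy k → i ∈ Ix l ∧ j ∈ Iy l → k = l := by
    intro i j k l hk hl
    by_contra hkl
    obtain ⟨hk1, hk2, hkM⟩ := hA6x k i hk.1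
    obtain ⟨hk1', hk2', hkN⟩ := hA6y k j hk.2
    obtain ⟨hl1, hl2, _⟩ := hA6x l i hl.1
    obtain ⟨hl1', hl2', _⟩ := hA6y l j hl.2
    obtain ⟨hx0, hx1, hx2⟩ := hA4x i hkM
    obtain ⟨hy0, hy1, hy2⟩ := hA4y j hkN
    set cx := (tx i + tx (i+1))/2
    set cy := (ty j + ty (j+1))/2
    have hmk : (cx, cy) ∈ (Set.Ioo (T.px k) (T.px k + T.w k)) ×ˢ
        (Set.Ioo (T.py k) (T.py k + T.h k)) := by
      simp only [Set.mem_prod, Set.mem_Ioo]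
      refine ⟨⟨?_, ?_⟩, ?_, ?_⟩ <;> simp only [cx, cy] <;> linarith
    have hml : (cx, cy) ∈ (Set.Ioo (T.px l) (T.px l + T.w l)) ×ˢ
        (Set.Ioo (T.py l) (T.py l + T.h l)) := by
      simp only [Set.mem_prod, Set.mem_Ioo]
      refine ⟨⟨?_, ?_⟩, ?_, ?_⟩ <;> simp only [cx, cy] <;> linarith
    exact (Set.disjoint_left.mp (T.disj k l hkl) hmk) hml
  -- assemble
  have hdisjF : (↑(Finset.univ : Finset (Fin T.m)) : Set (Fin T.m)).PairwiseDisjoint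
      (fun k => Ix k ×ˢ Iy k) := by
    intro k _ l _ hkl
    simp only [Function.onFun]
    rw [Finset.disjoint_left]
    rintro ⟨i, j⟩ hk hl
    rw [Finset.mem_product] at hk hl
    exact hkl (huniq i j k l hk hl)
  have hbiU : Finset.univ.biUnion (fun k => Ix k ×ˢ Iy k)
      = Finset.range Mx ×ˢ Finset.range Ny := by
    ext ⟨i, j⟩
    simp only [Finset.mem_biUnion, Finset.mem_univ, true_and, Finset.mem_product,
      Finset.mem_range]
    constructor
    · rintro ⟨k, hk⟩
      exact ⟨(hA6x k i hk.1).2.2, (hA6y k j hk.2).2.2⟩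
    · rintro ⟨hi, hj⟩
      obtain ⟨k, hk1, hk2⟩ := hex i j hi hj
      exact ⟨k, hk1, hk2⟩
  calc ∑ k, F (T.w k) * G (T.h k)
      = ∑ k, ∑ q ∈ Ix k ×ˢ Iy k, F (tx (q.1+1) - tx q.1) * G (ty (q.2+1) - ty q.2) := by
        apply Finset.sum_congr rfl
        intro k _
        rw [hA1x k, hA1y k, Finset.sum_mul_sum]
        rw [Finset.sum_product]
    _ = ∑ q ∈ Finset.univ.biUnion (fun k => Ix k ×ˢ Iy k),
          F (tx (q.1+1) - tx q.1) * G (ty (q.2+1) - ty q.2) := (Finset.sum_biUnion hdisjF).symm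
    _ = ∑ q ∈ Finset.range Mx ×ˢ Finset.range Ny,
          F (tx (q.1+1) - tx q.1) * G (ty (q.2+1) - ty q.2) := by rw [hbiU]
    _ = (∑ i ∈ Finset.range Mx, F (tx (i+1) - tx i)) *
          (∑ j ∈ Finset.range Ny, G (ty (j+1) - ty j)) := by
        rw [Finset.sum_mul_sum, Finset.sum_product]
    _ = F 1 * G r := by rw [← hA2x, ← hA2y]

end NDT


theorem no_diverse_tiling_pos_conj_boundary (p : ℚ) (hp : 0 < p)
    (hirr : Irrational (Real.sqrt p))
    (n : ℕ) (hn : 2 ≤ n) (a b : Fin n → ℚ) (X : Fin n → ℝ)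
    (hX : ∀ i, X i = (a i : ℝ) + (b i : ℝ) * Real.sqrt p)
    (hXpos : ∀ i, 0 < X i)
    (hdist : ∀ i j, i ≠ j → Irrational (X i / X j) ∧ Irrational (X i * X j))
    (hconj : ∀ i, 0 < (a i : ℝ) - (b i : ℝ) * Real.sqrt p)
    (e f : ℚ) (z : ℝ) (hz : z = (e : ℝ) + (f : ℝ) * Real.sqrt p) (hzpos : 0 < z)
    (he : 0 < e)
    (hf : |f| / e = Finset.univ.sup' ⟨⟨0, by omega⟩, Finset.mem_univ _⟩
        (fun i => |b i| / a i)) :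
    ¬ DiverselyTileable z X := by
  classical
  set s : ℝ := Real.sqrt p with hsdef
  have hs0 : 0 < s := NDT.sqrtp_pos hp
  have hs2 : s * s = (p : ℝ) := NDT.sqrtp_sq hp
  set i0 : Fin n := ⟨0, by omega⟩ with hi0
  set i1 : Fin n := ⟨1, by omega⟩ with hi1
  have hne : i0 ≠ i1 := by simp [hi0, hi1, Fin.ext_iff]
  -- positivity of the a i
  have haR : ∀ i, 0 < (a i : ℝ) := by
    intro i
    have h1 := hXpos i
    rw [hX i] at h1
    have h2 := hconj i
    linarith
  have haQ : ∀ i, 0 < a i := fun i => by exact_mod_cast haR i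
  have heR : (0:ℝ) < (e:ℝ) := by exact_mod_cast he
  -- sup bound
  have hble : ∀ i, |b i| * e ≤ |f| * a i := by
    intro i
    have h1 : |b i| / a i ≤ |f| / e := by
      rw [hf]
      exact Finset.le_sup' (fun i => |b i| / a i) (Finset.mem_univ i)
    rw [div_le_div_iff₀ (haQ i) he] at h1
    linarith
  have hbleR : ∀ i, (|b i| : ℝ) * e ≤ (|f| : ℝ) * a i := by
    intro i; exact_mod_cast hble i
  have habs : ∀ i, |(b i : ℝ)| = (|b i| : ℝ) := by intro i; push_cast; rfl
  have hfabs : |(f : ℝ)| = (|f| : ℝ) := by push_cast; rfl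
  -- case f = 0
  by_cases hf0 : f = 0
  · intro _
    have hb0 : ∀ i, b i = 0 := by
      intro i
      have h1 := hble i
      rw [hf0] at h1
      simp at h1
      have h2 : |b i| * e ≤ 0 := by simpa using h1
      have h3 : 0 ≤ |b i| := abs_nonneg _
      have h4 : |b i| ≤ 0 := by nlinarith
      exact abs_eq_zero.mp (le_antisymm h4 h3)
    apply (hdist i0 i1 hne).1
    refine ⟨a i0 / a i1, ?_⟩
    rw [hX i0, hX i1, hb0 i0, hb0 i1]
    push_cast
    ring
  -- main case
  rintro ⟨T, hall, hdiv⟩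
  have hfR : (f : ℝ) ≠ 0 := by exact_mod_cast hf0
  -- z' = conj z
  obtain ⟨z', hz'def⟩ : ∃ w : ℝ, w = (e : ℝ) - (f : ℝ) * s := ⟨_, rfl⟩
  have hz'_pos : 0 < z' := by
    -- |f| * s < e
    obtain ⟨im, _, him⟩ := Finset.exists_mem_eq_sup'
      (⟨(⟨0, by omega⟩ : Fin n), Finset.mem_univ _⟩ : (Finset.univ : Finset (Fin n)).Nonempty)
      (fun i => |b i| / a i)
    have h1 : |f| / e = |b im| / a im := hf.trans him
    have h2 : (|f| : ℝ) * (a im : ℝ) = (|b im| : ℝ) * e := by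
      have h2' : |f| * a im = |b im| * e := by
        rw [div_eq_div_iff he.ne' (haQ im).ne'] at h1
        linarith
      exact_mod_cast h2'
    have h3 : (|b im| : ℝ) * s < (a im : ℝ) := by
      have hc := hconj im
      have hx := hXpos im
      rw [hX im] at hx
      rcases abs_cases (b im) with ⟨hb, _⟩ | ⟨hb, _⟩
      · have : (|b im| : ℝ) = (b im : ℝ) := by exact_mod_cast hb
        rw [this]; linarith
      · have : (|b im| : ℝ) = -(b im : ℝ) := by exact_mod_cast hb
        rw [this]; linarith
    have h4 : (|f| : ℝ) * s < (e : ℝ) := by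
      have ha' := haR im
      nlinarith
    have h5 : (f : ℝ) * s ≤ (|f| : ℝ) * s := by
      have : (f:ℝ) ≤ |(f:ℝ)| := le_abs_self _
      rw [hfabs] at this
      nlinarith
    rw [hz'def]
    linarith
  have hzK : NDT.inK p z := ⟨e, f, hz⟩
  set g : ℝ → ℝ := NDT.gmap p hp hirr with hgdef
  have hg_add : ∀ x y : ℝ, g (x + y) = g x + g y := fun x y => NDT.gmap_add p hp hirr x y
  have hg_mulK : ∀ (y x : ℝ), NDT.inK p y → g (y * x) = NDT.conj p y * g x :=
    fun y x hy => NDT.gmap_mulK p hp hirr y x hy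
  have hg_one : g 1 = 1 := NDT.gmap_one p hp hirr
  have hgz : g z = z' := by
    rw [hgdef, NDT.gmap_inK p hp hirr z hzK, hz, NDT.conj_spec hirr]
    exact hz'def.symm
  -- per-tile data
  obtain ⟨y, hydef⟩ : ∃ t : Fin T.m → ℝ, t = fun k => T.h k / T.w k := ⟨_, rfl⟩
  obtain ⟨v, hvdef⟩ : ∃ t : Fin T.m → ℝ, t = fun k => g (T.w k) := ⟨_, rfl⟩
  obtain ⟨γ, hγdef⟩ : ∃ t : Fin T.m → ℝ, t = fun k => NDT.conj p (y k) := ⟨_, rfl⟩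
  have hw_ne : ∀ k, T.w k ≠ 0 := fun k => (T.w_pos k).ne'
  have hh_ne : ∀ k, T.h k ≠ 0 := fun k => (T.h_pos k).ne'
  have hy_pos : ∀ k, 0 < y k := by
    intro k; simp only [hydef]; exact div_pos (T.h_pos k) (T.w_pos k)
  have hhy : ∀ k, T.h k = y k * T.w k := by
    intro k
    simp only [hydef]
    rw [div_mul_cancel₀ (T.h k) (hw_ne k)]
  have hXK : ∀ i, NDT.inK p (X i) := fun i => ⟨a i, b i, hX i⟩
  have hXne : ∀ i, X i ≠ 0 := fun i => (hXpos i).ne'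
  have hconjX : ∀ i, NDT.conj p (X i) = (a i : ℝ) - (b i : ℝ) * s := by
    intro i; rw [hX i, NDT.conj_spec hirr]
  have hconjX_pos : ∀ i, 0 < NDT.conj p (X i) := by
    intro i; rw [hconjX i]; exact hconj i
  have htile : ∀ k, ∃ i, y k = X i ∨ y k = (X i)⁻¹ := by
    intro k
    obtain ⟨i, hi⟩ := hall k
    rcases hi with hi | hi
    · refine ⟨i, Or.inl ?_⟩
      simp only [hydef]
      exact hi
    · refine ⟨i, Or.inr ?_⟩
      simp only [hydef]
      rw [← hi, inv_div]
  have hyK : ∀ k, NDT.inK p (y k) := by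
    intro k
    obtain ⟨i, hi | hi⟩ := htile k
    · rw [hi]; exact hXK i
    · rw [hi]; exact NDT.inK_inv hp hirr (hXK i) (hXne i)
  have hγX : ∀ k i, y k = X i → γ k = NDT.conj p (X i) := by
    intro k i hi; simp only [hγdef]; rw [hi]
  have hγXinv : ∀ k i, y k = (X i)⁻¹ → γ k = (NDT.conj p (X i))⁻¹ := by
    intro k i hi
    simp only [hγdef]; rw [hi]
    exact NDT.conj_inv hp hirr (hXK i) (hXne i)
  have hγ_pos : ∀ k, 0 < γ k := by
    intro k
    obtain ⟨i, hi | hi⟩ := htile k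
    · rw [hγX k i hi]; exact hconjX_pos i
    · rw [hγXinv k i hi]; exact inv_pos.mpr (hconjX_pos i)
  -- basic difference identities
  have hcomp1 : ∀ i, NDT.conj p (X i) * z - X i * z' = 2*s*((a i:ℝ)*f - (b i:ℝ)*e) := by
    intro i
    rw [hconjX i, hX i, hz, hz'def]
    ring
  have hcomp2 : ∀ i, X i * z - NDT.conj p (X i) * z' = 2*s*((a i:ℝ)*f + (b i:ℝ)*e) := by
    intro i
    rw [hconjX i, hX i, hz, hz'def]
    ring
  -- the four Dehn sums
  have hS1 : ∑ k, y k * T.w k^2 = z := by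
    have h : ∑ k, T.w k * T.h k = 1 * z :=
      NDT.dehn hzpos T (fun x => x) (fun x => x) (fun _ _ => rfl) (fun _ _ => rfl)
    rw [one_mul] at h
    have h2 : ∑ k, y k * T.w k ^ 2 = ∑ k, T.w k * T.h k :=
      Finset.sum_congr rfl (fun k _ => by rw [hhy k]; ring)
    exact h2.trans h
  have hS2 : ∑ k, γ k * v k^2 = z' := by
    have h : ∑ k, g (T.w k) * g (T.h k) = g 1 * g z :=
      NDT.dehn hzpos T g g hg_add hg_add
    rw [hg_one, one_mul, hgz] at h
    have h2 : ∑ k, γ k * v k ^ 2 = ∑ k, g (T.w k) * g (T.h k) :=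
      Finset.sum_congr rfl (fun k _ => by
        simp only [hγdef, hvdef]
        rw [hhy k, hg_mulK (y k) (T.w k) (hyK k)]
        ring)
    exact h2.trans h
  have hS3 : ∑ k, y k * T.w k * v k = z := by
    have h : ∑ k, g (T.w k) * T.h k = g 1 * z :=
      NDT.dehn hzpos T g (fun x => x) hg_add (fun _ _ => rfl)
    rw [hg_one, one_mul] at h
    have h2 : ∑ k, y k * T.w k * v k = ∑ k, g (T.w k) * T.h k :=
      Finset.sum_congr rfl (fun k _ => by
        simp only [hvdef]
        conv_rhs => rw [hhy k]
        ring)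
    exact h2.trans h
  have hS4 : ∑ k, γ k * T.w k * v k = z' := by
    have h : ∑ k, T.w k * g (T.h k) = 1 * g z :=
      NDT.dehn hzpos T (fun x => x) g (fun _ _ => rfl) hg_add
    rw [hgz, one_mul] at h
    have h2 : ∑ k, γ k * T.w k * v k = ∑ k, T.w k * g (T.h k) :=
      Finset.sum_congr rfl (fun k _ => by
        simp only [hγdef, hvdef]
        rw [hhy k, hg_mulK (y k) (T.w k) (hyK k)]
        ring)
    exact h2.trans h
  -- the key per-tile equality
  have hfin : ∀ k, γ k * z = y k * z' := by
    rcases lt_or_gt_of_ne hfR with hfneg | hfpos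
    · -- f < 0 : per-tile y k * z' ≥ γ k * z
      have hkey : ∀ k, γ k * z ≤ y k * z' := by
        intro k
        have hfq : (f : ℝ) < 0 := hfneg
        obtain ⟨i, hi | hi⟩ := htile k
        · rw [hγX k i hi, hi]
          have h2 := hcomp1 i
          have hb1 : (b i : ℝ) * e ≥ -((|b i| : ℝ) * e) := by
            have : -(|b i| : ℝ) ≤ (b i : ℝ) := by
              rw [← habs i]; exact neg_abs_le _
            nlinarith
          have hf1 : (|f| : ℝ) = -(f : ℝ) := by
            rw [← hfabs]; exact abs_of_neg hfq
          have h3 : (a i : ℝ) * f - (b i : ℝ) * e ≤ 0 := by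
            have := hbleR i
            rw [hf1] at this
            nlinarith
          nlinarith [hs0]
        · rw [hγXinv k i hi, hi]
          have hA := hconjX_pos i
          have hB := hXpos i
          rw [inv_mul_eq_div, inv_mul_eq_div, div_le_div_iff₀ hA hB]
          have h2 := hcomp2 i
          have hb1 : (b i : ℝ) * e ≤ (|b i| : ℝ) * e := by
            have : (b i : ℝ) ≤ (|b i| : ℝ) := by rw [← habs i]; exact le_abs_self _
            nlinarith
          have hf1 : (|f| : ℝ) = -(f : ℝ) := by
            rw [← hfabs]; exact abs_of_neg hfneg
          have h3 : (a i : ℝ) * f + (b i : ℝ) * e ≤ 0 := by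
            have := hbleR i
            rw [hf1] at this
            nlinarith
          nlinarith [hs0]
      -- S' = ∑ γ w² ≥ z'
      obtain ⟨S', hS'def⟩ : ∃ w : ℝ, w = ∑ k, γ k * T.w k^2 := ⟨_, rfl⟩
      have hq : ∑ k, γ k * (T.w k - v k)^2 = S' - z' := by
        have hterm : ∀ k : Fin T.m, γ k * (T.w k - v k)^2
            = γ k * T.w k^2 - 2*(γ k * T.w k * v k) + γ k * v k^2 := by intro k; ring
        rw [Finset.sum_congr rfl (fun k _ => hterm k)]
        rw [Finset.sum_add_distrib, Finset.sum_sub_distrib, ← Finset.mul_sum]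
        rw [hS4, hS2, ← hS'def]
        ring
      have hS'ge : z' ≤ S' := by
        have h1 : (0:ℝ) ≤ ∑ k, γ k * (T.w k - v k)^2 :=
          Finset.sum_nonneg (fun k _ => mul_nonneg (hγ_pos k).le (sq_nonneg _))
        linarith [hq]
      have hptw : ∀ k, (z / z') * (γ k * T.w k^2) ≤ y k * T.w k^2 := by
        intro k
        have h1 := hkey k
        have h2 : (z / z') * γ k ≤ y k := by
          rw [div_mul_eq_mul_div, div_le_iff₀ hz'_pos]
          nlinarith
        nlinarith [sq_nonneg (T.w k), hγ_pos k]
      have heq1 : ∑ k, y k * T.w k^2 = ∑ k, (z / z') * (γ k * T.w k^2) := by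
        -- both ≥ and ≤
        have hge := Finset.sum_le_sum (fun k (_ : k ∈ Finset.univ) => hptw k)
        have h2 : (z / z') * S' ≥ (z/z') * z' := by
          apply mul_le_mul_of_nonneg_left hS'ge (le_of_lt (div_pos hzpos hz'_pos))
        have h3 : (z/z') * z' = z := by field_simp
        have h4 : ∑ k, (z / z') * (γ k * T.w k^2) = (z/z') * S' := by
          rw [← Finset.mul_sum, hS'def]
        rw [hS1]
        linarith
      -- per-tile equality
      have hterm0 : ∀ k, y k * T.w k^2 - (z / z') * (γ k * T.w k^2) = 0 := by
        have hsum0 : ∑ k, (y k * T.w k^2 - (z / z') * (γ k * T.w k^2)) = 0 := by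
          rw [Finset.sum_sub_distrib, heq1]; ring
        intro k
        have := (Finset.sum_eq_zero_iff_of_nonneg (fun k _ => by
          have := hptw k; linarith : ∀ k ∈ Finset.univ, 0 ≤ y k * T.w k^2 - (z / z') * (γ k * T.w k^2))).mp hsum0 k (Finset.mem_univ k)
        exact this
      intro k
      have h1 := hterm0 k
      have hw2 : (0:ℝ) < T.w k^2 := pow_pos (T.w_pos k) 2
      have h2 : y k = (z/z') * γ k := by
        have h3 : (y k - (z/z') * γ k) * T.w k^2 = 0 := by linarith [h1]
        have := mul_eq_zero.mp h3
        rcases this with h | h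
        · linarith
        · exact absurd h hw2.ne'
      rw [h2]
      field_simp
    · -- f > 0 : per-tile γ k * z ≥ y k * z'
      have hkey : ∀ k, y k * z' ≤ γ k * z := by
        intro k
        obtain ⟨i, hi | hi⟩ := htile k
        · rw [hγX k i hi, hi]
          have h2 := hcomp1 i
          have hb1 : (b i : ℝ) * e ≤ (|b i| : ℝ) * e := by
            have : (b i : ℝ) ≤ (|b i| : ℝ) := by rw [← habs i]; exact le_abs_self _
            nlinarith
          have hf1 : (|f| : ℝ) = (f : ℝ) := by
            rw [← hfabs]; exact abs_of_pos hfpos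
          have h3 : 0 ≤ (a i : ℝ) * f - (b i : ℝ) * e := by
            have := hbleR i
            rw [hf1] at this
            nlinarith
          nlinarith [hs0]
        · rw [hγXinv k i hi, hi]
          have hA := hconjX_pos i
          have hB := hXpos i
          rw [inv_mul_eq_div, inv_mul_eq_div, div_le_div_iff₀ hB hA]
          have h2 := hcomp2 i
          have hb1 : -((|b i| : ℝ) * e) ≤ (b i : ℝ) * e := by
            have : -(|b i| : ℝ) ≤ (b i : ℝ) := by rw [← habs i]; exact neg_abs_le _
            nlinarith
          have hf1 : (|f| : ℝ) = (f : ℝ) := by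
            rw [← hfabs]; exact abs_of_pos hfpos
          have h3 : 0 ≤ (a i : ℝ) * f + (b i : ℝ) * e := by
            have := hbleR i
            rw [hf1] at this
            nlinarith
          nlinarith [hs0]
      obtain ⟨S, hSdef⟩ : ∃ w : ℝ, w = ∑ k, y k * v k^2 := ⟨_, rfl⟩
      have hq : ∑ k, y k * (v k - T.w k)^2 = S - z := by
        have hterm : ∀ k : Fin T.m, y k * (v k - T.w k)^2
            = y k * v k^2 - 2*(y k * T.w k * v k) + y k * T.w k^2 := by intro k; ring
        rw [Finset.sum_congr rfl (fun k _ => hterm k)]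
        rw [Finset.sum_add_distrib, Finset.sum_sub_distrib, ← Finset.mul_sum]
        rw [hS3, hS1, ← hSdef]
        ring
      have hSge : z ≤ S := by
        have h1 : (0:ℝ) ≤ ∑ k, y k * (v k - T.w k)^2 :=
          Finset.sum_nonneg (fun k _ => mul_nonneg (hy_pos k).le (sq_nonneg _))
        linarith [hq]
      have hptw : ∀ k, (z' / z) * (y k * v k^2) ≤ γ k * v k^2 := by
        intro k
        have h1 := hkey k
        have h2 : (z' / z) * y k ≤ γ k := by
          rw [div_mul_eq_mul_div, div_le_iff₀ hzpos]
          nlinarith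
        nlinarith [sq_nonneg (v k), hy_pos k]
      have heq1 : ∑ k, γ k * v k^2 = ∑ k, (z' / z) * (y k * v k^2) := by
        have h2 : (z' / z) * S ≥ (z'/z) * z := by
          apply mul_le_mul_of_nonneg_left hSge (le_of_lt (div_pos hz'_pos hzpos))
        have h3 : (z'/z) * z = z' := by field_simp
        have h4 : ∑ k, (z' / z) * (y k * v k^2) = (z'/z) * S := by
          rw [← Finset.mul_sum, hSdef]
        have hge := Finset.sum_le_sum (fun k (_ : k ∈ Finset.univ) => hptw k)
        rw [hS2]
        linarith
      have hterm0 : ∀ k, γ k * v k^2 - (z' / z) * (y k * v k^2) = 0 := by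
        have hsum0 : ∑ k, (γ k * v k^2 - (z' / z) * (y k * v k^2)) = 0 := by
          rw [Finset.sum_sub_distrib, heq1]; ring
        intro k
        exact (Finset.sum_eq_zero_iff_of_nonneg (fun k _ => by
          have := hptw k; linarith : ∀ k ∈ Finset.univ, 0 ≤ γ k * v k^2 - (z' / z) * (y k * v k^2))).mp hsum0 k (Finset.mem_univ k)
      -- also S = z forces v = w
      have hSz : S = z := by
        have h2 : (z' / z) * S ≥ (z'/z) * z := by
          apply mul_le_mul_of_nonneg_left hSge (le_of_lt (div_pos hz'_pos hzpos))
        have h3 : (z'/z) * z = z' := by field_simp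
        have h4 : ∑ k, (z' / z) * (y k * v k^2) = (z'/z) * S := by rw [← Finset.mul_sum, hSdef]
        have h5 : (z'/z) * S = z' := by rw [← h4, ← heq1, hS2]
        have h6 : z'/z ≠ 0 := (div_pos hz'_pos hzpos).ne'
        have h7 : (z'/z) * S = (z'/z) * z := by rw [h5, h3]
        exact mul_left_cancel₀ h6 h7
      have hvw : ∀ k, v k = T.w k := by
        have hsum0 : ∑ k, y k * (v k - T.w k)^2 = 0 := by rw [hq, hSz]; ring
        intro k
        have h1 := (Finset.sum_eq_zero_iff_of_nonneg (fun k _ =>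
          mul_nonneg (hy_pos k).le (sq_nonneg _))).mp hsum0 k (Finset.mem_univ k)
        have h2 : (v k - T.w k)^2 = 0 := by
          rcases mul_eq_zero.mp h1 with h | h
          · exact absurd h (hy_pos k).ne'
          · exact h
        have := pow_eq_zero_iff (n := 2) (by norm_num) |>.mp h2
        linarith
      intro k
      have h1 := hterm0 k
      have hv2 : (0:ℝ) < v k^2 := by rw [hvw k]; exact pow_pos (T.w_pos k) 2
      have h2 : γ k = (z'/z) * y k := by
        have h3 : (γ k - (z'/z) * y k) * v k^2 = 0 := by linarith [h1]
        rcases mul_eq_zero.mp h3 with h | h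
        · linarith
        · exact absurd h hv2.ne'
      rw [h2]
      field_simp
  -- extract rational relations for i0, i1
  have hrel2 : ∀ i : Fin n, (∃ k, T.ratioOK k (X i)) →
      (b i * e = a i * f ∨ b i * e = -(a i * f)) := by
    intro i ⟨k, hk⟩
    have hyk : y k = X i ∨ y k = (X i)⁻¹ := by
      rcases hk with hk | hk
      · refine Or.inl ?_
        simp only [hydef]
        exact hk
      · refine Or.inr ?_
        simp only [hydef]
        rw [← hk, inv_div]
    rcases hyk with hyk | hyk
    · left
      have h1 := hfin k
      rw [hγX k i hyk, hyk] at h1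
      have h2 := hcomp1 i
      have h3 : 2*s*((a i:ℝ)*f - (b i:ℝ)*e) = 0 := by linarith
      have h4 : (a i:ℝ)*f - (b i:ℝ)*e = 0 := by
        rcases mul_eq_zero.mp h3 with h | h
        · nlinarith [hs0]
        · exact h
      have h5 : (a i:ℝ)*f = (b i:ℝ)*e := by linarith
      have h6 : a i * f = b i * e := by exact_mod_cast h5
      linarith [h6]
    · right
      have h1 := hfin k
      rw [hγXinv k i hyk, hyk] at h1
      have hA := hconjX_pos i
      have hB := hXpos i
      have h1' : X i * z = NDT.conj p (X i) * z' := by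
        rw [inv_mul_eq_div, inv_mul_eq_div] at h1
        rw [div_eq_div_iff hA.ne' hB.ne'] at h1
        linarith
      have h2 := hcomp2 i
      have h3 : 2*s*((a i:ℝ)*f + (b i:ℝ)*e) = 0 := by linarith
      have h4 : (a i:ℝ)*f + (b i:ℝ)*e = 0 := by
        rcases mul_eq_zero.mp h3 with h | h
        · nlinarith [hs0]
        · exact h
      have h5 : (b i:ℝ)*e = -((a i:ℝ)*f) := by linarith
      have h6 : b i * e = -(a i * f) := by exact_mod_cast h5
      exact h6
  obtain ⟨k0, hk0⟩ := hdiv i0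
  obtain ⟨k1, hk1⟩ := hdiv i1
  have h0 := hrel2 i0 ⟨k0, hk0⟩
  have h1 := hrel2 i1 ⟨k1, hk1⟩
  have heQ : e ≠ 0 := he.ne'
  have hfinal : a i1 * b i0 = a i0 * b i1 ∨ a i0 * b i1 + a i1 * b i0 = 0 := by
    rcases h0 with h0 | h0 <;> rcases h1 with h1 | h1
    · left
      have : e * (a i1 * b i0) = e * (a i0 * b i1) := by linear_combination a i1 * h0 - a i0 * h1
      exact mul_left_cancel₀ heQ this
    · right
      have hh : e * (a i0 * b i1 + a i1 * b i0) = 0 := by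
        linear_combination a i0 * h1 + a i1 * h0
      rcases mul_eq_zero.mp hh with h | h
      · exact absurd h heQ
      · exact h
    · right
      have hh : e * (a i0 * b i1 + a i1 * b i0) = 0 := by
        linear_combination a i0 * h1 + a i1 * h0
      rcases mul_eq_zero.mp hh with h | h
      · exact absurd h heQ
      · exact h
    · left
      have : e * (a i1 * b i0) = e * (a i0 * b i1) := by linear_combination a i1 * h0 - a i0 * h1
      exact mul_left_cancel₀ heQ this
  rcases hfinal with hA | hB
  · apply (hdist i0 i1 hne).1
    refine ⟨a i0 / a i1, ?_⟩
    have hX1ne := hXne i1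
    have ha1ne : ((a i1 : ℝ)) ≠ 0 := (haR i1).ne'
    have hAR : (a i1 : ℝ) * (b i0 : ℝ) = (a i0 : ℝ) * (b i1 : ℝ) := by exact_mod_cast hA
    push_cast
    rw [div_eq_div_iff ha1ne hX1ne]
    rw [hX i0, hX i1]
    linear_combination (-s) * hAR
  · apply (hdist i0 i1 hne).2
    refine ⟨a i0 * a i1 + b i0 * b i1 * p, ?_⟩
    have hBR : (a i0 : ℝ) * (b i1 : ℝ) + (a i1 : ℝ) * (b i0 : ℝ) = 0 := by exact_mod_cast hB
    rw [hX i0, hX i1]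
    push_cast
    linear_combination (-(b i0 : ℝ) * (b i1 : ℝ)) * hs2 + (-s) * hBR
end
end
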